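/- There exist three pairwise disjoint subsets A, B and C of ℂ such that ℂ = A ∪ B ∪ C and none of A, B, C is fractionally dense in ℂ, i.e. none of the quotient sets R(A), R(B), R(C) is dense in ℂ. -/

import Mathlib

lemma key1 (a b e f r s : ℝ) (hr : 0 ≤ r) (hs : 0 ≤ s)
    (hx : a^2 + b^2 = r^2) (hy : e^2 + f^2 = s^2)
    (ha : r ≤ 2*a) (he : s ≤ 2*e) : -(r*s)/2 ≤ a*e + b*f := by
  have hae : r*s ≤ 4*(a*e) := by nlinarith
  have hb2 : 4*b^2 ≤ 3*r^2 := by nlinarith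
  have hf2 : 4*f^2 ≤ 3*s^2 := by nlinarith
  have hprod : (4*(b*f))^2 ≤ (3*(r*s))^2 := by
    nlinarith [sq_nonneg b, sq_nonneg f, sq_nonneg (b*s), sq_nonneg (f*r)]
  have hbf : -(3*(r*s)) ≤ 4*(b*f) := by nlinarith [mul_nonneg hr hs]
  linarith

lemma key2 (c d a b e f r s : ℝ) (hcd : c^2 + d^2 = 1) (hr : 0 ≤ r) (hs : 0 ≤ s)
    (hx : a^2 + b^2 = r^2) (hy : e^2 + f^2 = s^2)
    (ha : r ≤ 2*(c*a + d*b)) (he : s ≤ 2*(c*e + d*f)) : -(r*s)/2 ≤ a*e + b*f := by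
  have h := key1 (c*a + d*b) (c*b - d*a) (c*e + d*f) (c*f - d*e) r s hr hs
    (by nlinarith) (by nlinarith) ha he
  have hid : (c*a + d*b)*(c*e + d*f) + (c*b - d*a)*(c*f - d*e) = a*e + b*f := by
    linear_combination (a*e + b*f) * hcd
  linarith

lemma norm_sq_re_im (z : ℂ) : z.re^2 + z.im^2 = ‖z‖^2 := by
  rw [Complex.sq_norm, Complex.normSq_apply]; ring

lemma sector_not_dense (c d : ℝ) (hcd : c^2 + d^2 = 1) (S : Set ℂ)
    (hS : ∀ z ∈ S, ‖z‖ ≤ 2*(c*z.re + d*z.im)) :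
    ¬ Dense {z : ℂ | ∃ x ∈ S, ∃ y ∈ S, y ≠ 0 ∧ z = x / y} := by
  intro hD
  obtain ⟨z, hzQ, hzB⟩ := hD.exists_mem_open (Metric.isOpen_ball (x := (-1:ℂ)) (ε := 1/4))
    ⟨-1, by simp⟩
  obtain ⟨x, hx, y, hy, hy0, rfl⟩ := hzQ
  rw [Metric.mem_ball, dist_eq_norm] at hzB
  have hball : ‖x/y + 1‖ < 1/4 := by simpa [sub_neg_eq_add] using hzB
  have hnorm : ‖x/y‖ < 5/4 := by
    have h := norm_sub_le (x/y + 1) 1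
    simp only [add_sub_cancel_right, norm_one] at h
    linarith
  have hre : (x/y).re < -3/4 := by
    have h1 : (x/y + 1).re ≤ ‖x/y + 1‖ := Complex.re_le_norm _
    simp only [Complex.add_re, Complex.one_re] at h1
    linarith
  have hy2 : (0:ℝ) < ‖y‖^2 := by
    have : (0:ℝ) < ‖y‖ := norm_pos_iff.mpr hy0
    positivity
  have hdivre : (x/y).re = (x.re*y.re + x.im*y.im) / ‖y‖^2 := by
    rw [Complex.div_re, ← norm_sq_re_im, Complex.normSq_apply]
    ring
  have hdivnorm : ‖x/y‖ = ‖x‖/‖y‖ := norm_div x y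
  have hy0'' : ‖y‖ ≠ 0 := (norm_pos_iff.mpr hy0).ne'
  have hlt : x.re*y.re + x.im*y.im < -(‖x‖*‖y‖)/2 := by
    have h2 : (x/y).re < -‖x/y‖/2 := by
      have h3 : ‖x/y‖ < 5/4 := hnorm
      linarith
    have e1 : x.re*y.re + x.im*y.im = (x/y).re * ‖y‖^2 := by
      rw [hdivre, div_mul_cancel₀ _ (ne_of_gt hy2)]
    have hmc : ‖x‖/‖y‖ * ‖y‖^2 = ‖x‖*‖y‖ := by
      rw [pow_two, ← mul_assoc, div_mul_cancel₀ _ hy0'']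
    have e2 : -(‖x‖*‖y‖)/2 = (-‖x/y‖/2) * ‖y‖^2 := by
      rw [hdivnorm]
      calc -(‖x‖*‖y‖)/2 = -(‖x‖/‖y‖ * ‖y‖^2)/2 := by rw [hmc]
        _ = (-(‖x‖/‖y‖)/2) * ‖y‖^2 := by ring
    rw [e1, e2]
    exact mul_lt_mul_of_pos_right h2 hy2
  have hkey := key2 c d x.re x.im y.re y.im ‖x‖ ‖y‖ hcd (norm_nonneg x) (norm_nonneg y)
    (norm_sq_re_im x) (norm_sq_re_im y) (hS x hx) (hS y hy)
  linarith

lemma cover (z : ℂ) (h1 : ¬ ‖z‖ ≤ 2*(1*z.re + 0*z.im))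
    (h2 : ¬ ‖z‖ ≤ 2*((-1/2)*z.re + (Real.sqrt 3/2)*z.im)) :
    ‖z‖ ≤ 2*((-1/2)*z.re + (-(Real.sqrt 3)/2)*z.im) := by
  push_neg at h1 h2
  have hs3 : Real.sqrt 3 ^ 2 = 3 := Real.sq_sqrt (by norm_num)
  have hs3' : (0:ℝ) ≤ Real.sqrt 3 := Real.sqrt_nonneg 3
  have hn := norm_sq_re_im z
  have hr : (0:ℝ) ≤ ‖z‖ := norm_nonneg z
  by_contra h3
  push_neg at h3
  nlinarith [sq_nonneg (‖z‖ + z.re), sq_nonneg (‖z‖ - 2*z.re),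
    mul_pos (by linarith : (0:ℝ) < ‖z‖ + z.re - Real.sqrt 3 * z.im)
      (by nlinarith : (0:ℝ) < ‖z‖ + z.re + Real.sqrt 3 * z.im)]

/-- There is a three-partition `ℂ = A ∪ B ∪ C` into pairwise disjoint sets,
none of which is fractionally dense in `ℂ`. -/
theorem stmt_14 :
    ∃ A B C : Set ℂ,
      A ∪ B ∪ C = Set.univ ∧ Disjoint A B ∧ Disjoint B C ∧ Disjoint A C ∧
      ¬ Dense {z : ℂ | ∃ x ∈ A, ∃ y ∈ A, y ≠ 0 ∧ z = x / y} ∧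
      ¬ Dense {z : ℂ | ∃ x ∈ B, ∃ y ∈ B, y ≠ 0 ∧ z = x / y} ∧
      ¬ Dense {z : ℂ | ∃ x ∈ C, ∃ y ∈ C, y ≠ 0 ∧ z = x / y} := by
  set P1 : ℂ → Prop := fun z => ‖z‖ ≤ 2*(1*z.re + 0*z.im) with hP1
  set P2 : ℂ → Prop := fun z => ‖z‖ ≤ 2*((-1/2)*z.re + (Real.sqrt 3/2)*z.im) with hP2
  refine ⟨{z | P1 z}, {z | P2 z ∧ ¬ P1 z}, {z | ¬ P1 z ∧ ¬ P2 z}, ?_, ?_, ?_, ?_, ?_, ?_, ?_⟩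
  · ext z; simp only [Set.mem_union, Set.mem_setOf_eq, Set.mem_univ, iff_true]
    by_cases h1 : P1 z
    · exact Or.inl (Or.inl h1)
    · by_cases h2 : P2 z
      · exact Or.inl (Or.inr ⟨h2, h1⟩)
      · exact Or.inr ⟨h1, h2⟩
  · rw [Set.disjoint_left]; rintro z hz ⟨_, h⟩; exact h hz
  · rw [Set.disjoint_left]; rintro z ⟨h2, _⟩ ⟨_, h⟩; exact h h2
  · rw [Set.disjoint_left]; rintro z hz ⟨h, _⟩; exact h hz
  · exact sector_not_dense 1 0 (by norm_num) _ (fun z hz => hz)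
  · exact sector_not_dense (-1/2) (Real.sqrt 3/2) (by
      have : Real.sqrt 3 ^ 2 = 3 := Real.sq_sqrt (by norm_num)
      nlinarith) _ (fun z hz => hz.1)
  · exact sector_not_dense (-1/2) (-(Real.sqrt 3)/2) (by
      have : Real.sqrt 3 ^ 2 = 3 := Real.sq_sqrt (by norm_num)
      nlinarith) _ (fun z hz => cover z hz.1 hz.2)
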